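/- arXiv:1401.0062 — 2 statements merged into one kernel-verified Lean document; each statement's English description precedes it below -/
import Mathlib

section
/- For all real numbers r > 0 and θ > 0, max{r, 1} ≤ max{r, r⁻¹} · θ · (ψ(r+θ) − ψ(θ)). Equivalently, the expected number of trials 𝔼η = max{r,1}/(θ[ψ(r+θ) − ψ(θ)]) of the rejection sampler for the digamma distribution satisfies 𝔼η ≤ max{r, r⁻¹}. -/
/-- Digamma function `ψ(x) = Γ'(x)/Γ(x)`. -/
noncomputable def psi (x : ℝ) : ℝ := deriv Real.Gamma x / Real.Gamma x

lemma Gamma_ne_neg_nat {x : ℝ} (hx : 0 < x) : ∀ m : ℕ, x ≠ -m := by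
  intro m
  have : (0:ℝ) ≤ m := Nat.cast_nonneg m
  intro h; rw [h] at hx; linarith

lemma hasDerivAt_logGamma {x : ℝ} (hx : 0 < x) :
    HasDerivAt (Real.log ∘ Real.Gamma) (psi x) x := by
  have hd := (Real.differentiableAt_Gamma (Gamma_ne_neg_nat hx)).hasDerivAt
  exact hd.log (Real.Gamma_pos_of_pos hx).ne'

lemma psi_mono {x y : ℝ} (hx : 0 < x) (hxy : x ≤ y) : psi x ≤ psi y := by
  rcases eq_or_lt_of_le hxy with rfl | h
  · exact le_refl _
  have hy : 0 < y := lt_trans hx h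
  have h1 := Real.convexOn_log_Gamma.le_slope_of_hasDerivAt
    (Set.mem_Ioi.2 hx) (Set.mem_Ioi.2 hy) h (hasDerivAt_logGamma hx)
  have h2 := Real.convexOn_log_Gamma.slope_le_of_hasDerivAt
    (Set.mem_Ioi.2 hx) (Set.mem_Ioi.2 hy) h (hasDerivAt_logGamma hy)
  exact le_trans h1 h2

lemma psi_add_one {x : ℝ} (hx : 0 < x) : psi (x + 1) = psi x + 1 / x := by
  have hΓx : 0 < Real.Gamma x := Real.Gamma_pos_of_pos hx
  have hd : HasDerivAt Real.Gamma (deriv Real.Gamma x) x :=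
    (Real.differentiableAt_Gamma (Gamma_ne_neg_nat hx)).hasDerivAt
  have hd1 : HasDerivAt Real.Gamma (deriv Real.Gamma (x + 1)) (x + 1) :=
    (Real.differentiableAt_Gamma (Gamma_ne_neg_nat (by linarith))).hasDerivAt
  -- derivative of y ↦ Γ(y+1) at x
  have hcomp : HasDerivAt (fun y : ℝ => Real.Gamma (y + 1))
      (deriv Real.Gamma (x + 1)) x := by
    have := hd1.comp x ((hasDerivAt_id x).add_const 1)
    exact this.congr_deriv (by simp)
  -- derivative of y ↦ y * Γ(y) at x
  have hmul : HasDerivAt (fun y : ℝ => y * Real.Gamma y)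
      (Real.Gamma x + x * deriv Real.Gamma x) x := by
    have := (hasDerivAt_id x).mul hd
    exact this.congr_deriv (by simp)
  -- the two functions agree near x
  have heq : (fun y : ℝ => Real.Gamma (y + 1)) =ᶠ[nhds x] fun y : ℝ => y * Real.Gamma y := by
    filter_upwards [eventually_gt_nhds hx] with y hy
    exact Real.Gamma_add_one (ne_of_gt hy)
  have hcomp' : HasDerivAt (fun y : ℝ => y * Real.Gamma y)
      (deriv Real.Gamma (x + 1)) x := hcomp.congr_of_eventuallyEq heq.symm
  have hder : deriv Real.Gamma (x + 1) = Real.Gamma x + x * deriv Real.Gamma x :=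
    hcomp'.unique hmul
  have hΓ1 : Real.Gamma (x + 1) = x * Real.Gamma x := Real.Gamma_add_one (ne_of_gt hx)
  unfold psi
  rw [hder, hΓ1]
  field_simp
  ring

lemma psi_diff_ge (r : ℝ) (hr0 : 0 < r) (hr1 : r ≤ 1) :
    ∀ n : ℕ, ∀ x : ℝ, 0 < x → r / x - r / (x + n) ≤ psi (x + r) - psi x := by
  intro n
  induction n with
  | zero =>
    intro x hx
    simp only [Nat.cast_zero, add_zero, sub_self]
    linarith [psi_mono hx (by linarith : x ≤ x + r)]
  | succ n ih =>
    intro x hx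
    have hx1 : (0:ℝ) < x + 1 := by linarith
    have hxr : (0:ℝ) < x + r := by linarith
    have h1 : psi (x + r + 1) = psi (x + r) + 1 / (x + r) := psi_add_one hxr
    have h2 : psi (x + 1) = psi x + 1 / x := psi_add_one hx
    have h3 := ih (x + 1) hx1
    have hrw : x + 1 + r = x + r + 1 := by ring
    rw [hrw, h1, h2] at h3
    -- h3 : r/(x+1) - r/(x+1+n) ≤ psi (x+r) + 1/(x+r) - (psi x + 1/x)
    have key : r / x - r / (x + (n + 1 : ℕ)) ≤
        r / (x + 1) - r / (x + 1 + n) + (1 / x - 1 / (x + r)) := by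
      push_cast
      have heq : x + ((n:ℝ) + 1) = x + 1 + n := by ring
      rw [heq]
      have h4 : r / x - r / (x + 1) ≤ 1 / x - 1 / (x + r) := by
        rw [div_sub_div _ _ (ne_of_gt hx) (ne_of_gt hx1),
            div_sub_div _ _ (ne_of_gt hx) (ne_of_gt hxr)]
        rw [div_le_div_iff₀ (by positivity) (by positivity)]
        nlinarith [mul_nonneg (mul_nonneg hr0.le hx.le) (sub_nonneg.2 hr1)]
      linarith
    linarith

lemma psi_diff_ge_limit (r θ : ℝ) (hr0 : 0 < r) (hr1 : r ≤ 1) (hθ : 0 < θ) :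
    r / θ ≤ psi (θ + r) - psi θ := by
  have htend : Filter.Tendsto (fun n : ℕ => r / θ - r / (θ + n)) Filter.atTop
      (nhds (r / θ)) := by
    have h1 : Filter.Tendsto (fun n : ℕ => θ + (n:ℝ)) Filter.atTop Filter.atTop :=
      Filter.tendsto_atTop_add_const_left _ _ tendsto_natCast_atTop_atTop
    have h2 : Filter.Tendsto (fun n : ℕ => r / (θ + (n:ℝ))) Filter.atTop (nhds 0) :=
      Filter.Tendsto.div_atTop tendsto_const_nhds h1
    have := (tendsto_const_nhds (x := r / θ) (f := Filter.atTop (α := ℕ))).sub h2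
    simpa using this
  exact le_of_tendsto htend (Filter.Eventually.of_forall fun n => psi_diff_ge r hr0 hr1 n θ hθ)

theorem stmt_4 (r θ : ℝ) (hr : 0 < r) (hθ : 0 < θ) :
    max r 1 ≤ max r r⁻¹ * θ * (psi (r + θ) - psi θ) := by
  rcases le_total 1 r with h1 | h1
  · -- r ≥ 1
    have hinv : r⁻¹ ≤ r := le_trans (inv_le_one_of_one_le₀ h1) h1
    rw [max_eq_left h1, max_eq_left hinv]
    have hΔ : 1 / θ ≤ psi (r + θ) - psi θ := by
      have := psi_mono (by linarith : (0:ℝ) < θ + 1) (by linarith : θ + 1 ≤ θ + r)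
      have h2 := psi_add_one hθ
      have hrw : θ + r = r + θ := by ring
      rw [hrw] at this
      linarith
    have hθΔ : 1 ≤ θ * (psi (r + θ) - psi θ) := by
      have := mul_le_mul_of_nonneg_left hΔ (le_of_lt hθ)
      rwa [mul_one_div, div_self (ne_of_gt hθ)] at this
    nlinarith
  · -- r ≤ 1
    have hinv : r ≤ r⁻¹ := le_trans h1 ((one_le_inv₀ hr).mpr h1)
    rw [max_eq_right h1, max_eq_right hinv]
    have hΔ : r / θ ≤ psi (r + θ) - psi θ := by
      have := psi_diff_ge_limit r θ hr h1 hθ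
      have hrw : θ + r = r + θ := by ring
      rwa [hrw] at this
    have hpos : 0 < r⁻¹ * θ := by positivity
    have := mul_le_mul_of_nonneg_left hΔ (le_of_lt hpos)
    have heq : r⁻¹ * θ * (r / θ) = 1 := by field_simp
    calc (1:ℝ) = r⁻¹ * θ * (r / θ) := heq.symm
      _ ≤ r⁻¹ * θ * (psi (r + θ) - psi θ) := this
end

section
/- For all real numbers r > 0, α > 0, β > 0, ∑_{z=0}^∞ ((r)_z / z!) · B(z+α, r+β) = B(α, β). In particular, the beta negative binomial distribution BNB(r, α, β) is a probability mass function: ∑_{z=0}^∞ BNB(z; r, α, β) = 1. -/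
open scoped BigOperators

/-- Rising factorial `(a)_z = a(a+1)⋯(a+z-1)`. -/
noncomputable def risingFac (a : ℝ) (z : ℕ) : ℝ := ∏ i ∈ Finset.range z, (a + i)

/-- Beta function `B(α,β) = Γ(α)Γ(β)/Γ(α+β)`. -/
noncomputable def betaFn (a b : ℝ) : ℝ := Real.Gamma a * Real.Gamma b / Real.Gamma (a + b)

/-- Probability mass function of the beta negative binomial distribution. -/
noncomputable def BNBpmf (r α β : ℝ) (z : ℕ) : ℝ :=
  (risingFac r z / z.factorial) * (betaFn (z + α) (r + β) / betaFn α β)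

open Filter


lemma risingFac_zero (a : ℝ) : risingFac a 0 = 1 := by simp [risingFac]

lemma risingFac_succ (a : ℝ) (z : ℕ) : risingFac a (z + 1) = risingFac a z * (a + z) := by
  simp [risingFac, Finset.prod_range_succ]

lemma risingFac_pos {a : ℝ} (ha : 0 < a) (z : ℕ) : 0 < risingFac a z := by
  refine Finset.prod_pos fun i _ => by positivity

/-- coefficient -/
noncomputable def bcoef (r : ℝ) (z : ℕ) : ℝ := risingFac r z / z.factorial

lemma bcoef_zero (r : ℝ) : bcoef r 0 = 1 := by simp [bcoef, risingFac_zero]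

lemma bcoef_pos {r : ℝ} (hr : 0 < r) (z : ℕ) : 0 < bcoef r z :=
  div_pos (risingFac_pos hr z) (by positivity)

lemma bcoef_succ_mul (r : ℝ) (z : ℕ) :
    bcoef r (z + 1) * (z + 1) = bcoef r z * (r + z) := by
  have hz : ((z + 1 : ℕ) : ℝ) ≠ 0 := by positivity
  have hf : ((z.factorial : ℝ)) ≠ 0 := by positivity
  rw [bcoef, bcoef, risingFac_succ, Nat.factorial_succ]
  push_cast
  field_simp

lemma tendsto_ratio (r : ℝ) : Tendsto (fun n : ℕ => (r + n) / (n + 1)) atTop (nhds 1) := by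
  have h : (fun n : ℕ => (r + n) / (n + 1)) = fun n : ℕ => ((r - 1) / (n + 1) + 1) := by
    funext n
    have : ((n : ℝ) + 1) ≠ 0 := by positivity
    field_simp
    ring
  rw [h]
  have h2 : Tendsto (fun n : ℕ => (r - 1) / (n + 1)) atTop (nhds 0) := by
    apply Tendsto.div_atTop (tendsto_const_nhds)
    exact tendsto_atTop_add_const_right atTop 1 tendsto_natCast_atTop_atTop
  simpa using h2.add tendsto_const_nhds

lemma summable_bcoef_pow {r : ℝ} (hr : 0 < r) {y : ℝ} (hy : |y| < 1) :
    Summable (fun z : ℕ => bcoef r z * y ^ z) := by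
  rcases eq_or_ne y 0 with rfl | hy0
  · apply summable_of_ne_finset_zero (s := {0})
    intro z hz
    simp only [Finset.mem_singleton] at hz
    simp [zero_pow hz]
  · apply summable_of_ratio_test_tendsto_lt_one hy
    · exact Eventually.of_forall fun n => by
        have := bcoef_pos hr n
        positivity
    · have key : ∀ n : ℕ, ‖bcoef r (n+1) * y ^ (n+1)‖ / ‖bcoef r n * y ^ n‖
          = (r + n) / (n + 1) * |y| := by
        intro n
        have h1 : bcoef r (n+1) = bcoef r n * (r + n) / (n + 1) := by
          have := bcoef_succ_mul r n
          field_simp at this ⊢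
          linarith
        rw [h1]
        have hb := bcoef_pos hr n
        have hyn : (0:ℝ) < |y| ^ n := by positivity
        rw [Real.norm_eq_abs, Real.norm_eq_abs, abs_mul, abs_mul, abs_pow, abs_pow,
          pow_succ]
        rw [abs_div, abs_mul]
        rw [abs_of_pos hb, abs_of_pos (by positivity : (0:ℝ) < r + n),
          abs_of_pos (by positivity : (0:ℝ) < (n:ℝ) + 1)]
        field_simp
      simp only [key]
      have := (tendsto_ratio r).mul_const |y|
      simpa using this

lemma summable_deriv_aux {r : ℝ} (hr : 0 < r) {ρ : ℝ} (hρ0 : 0 < ρ) (hρ1 : ρ < 1) :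
    Summable (fun z : ℕ => bcoef r z * z * ρ ^ z / ρ) := by
  apply Summable.div_const
  apply summable_of_ratio_test_tendsto_lt_one hρ1
  · filter_upwards [eventually_ge_atTop 1] with n hn
    have := bcoef_pos hr n
    have hn' : (0:ℝ) < (n:ℝ) := by exact_mod_cast hn
    positivity
  · have key : ∀ᶠ n : ℕ in atTop,
        ‖bcoef r (n+1) * ((n+1 : ℕ) : ℝ) * ρ ^ (n+1)‖ / ‖bcoef r n * (n : ℝ) * ρ ^ n‖
        = (r + n) / n * ρ := by
      filter_upwards [eventually_ge_atTop 1] with n hn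
      have h1 : bcoef r (n+1) * ((n:ℝ)+1) = bcoef r n * (r + n) := bcoef_succ_mul r n
      have hb := bcoef_pos hr n
      have hb1 := bcoef_pos hr (n+1)
      have hn' : (0:ℝ) < (n:ℝ) := by exact_mod_cast hn
      have hρn : (0:ℝ) < ρ ^ n := by positivity
      push_cast
      rw [Real.norm_eq_abs, Real.norm_eq_abs,
        abs_of_pos (by positivity), abs_of_pos (by positivity)]
      rw [show bcoef r (n+1) * ((n:ℝ)+1) * ρ^(n+1) = (bcoef r n * (r+(n:ℝ))) * ρ^n * ρ by
        rw [pow_succ, ← h1]; ring]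
      field_simp
    apply Tendsto.congr' (by filter_upwards [key] with n h using h.symm)
    have h2 : Tendsto (fun n : ℕ => (r + n) / n) atTop (nhds 1) := by
      have h : ∀ᶠ n : ℕ in atTop, (r + n) / n = r / n + 1 := by
        filter_upwards [eventually_ge_atTop 1] with n hn
        have hn' : ((n:ℝ)) ≠ 0 := by
          have : (0:ℝ) < (n:ℝ) := by exact_mod_cast hn
          exact this.ne'
        field_simp
      apply Tendsto.congr' (by filter_upwards [h] with n hh using hh.symm)
      have : Tendsto (fun n : ℕ => r / n) atTop (nhds 0) :=
        Tendsto.div_atTop tendsto_const_nhds tendsto_natCast_atTop_atTop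
      simpa using this.add tendsto_const_nhds
    simpa using h2.mul_const ρ

lemma norm_deriv_le {r : ℝ} (hr : 0 < r) {ρ : ℝ} (hρ0 : 0 < ρ) {t : ℝ} (ht : |t| ≤ ρ)
    (n : ℕ) : ‖bcoef r n * (n * t ^ (n - 1))‖ ≤ bcoef r n * n * ρ ^ n / ρ := by
  have hb := bcoef_pos hr n
  rw [Real.norm_eq_abs, abs_mul, abs_mul, abs_pow, abs_of_pos hb,
    abs_of_nonneg (Nat.cast_nonneg n)]
  cases n with
  | zero => simp
  | succ k =>
    have h1 : |t| ^ (k + 1 - 1) ≤ ρ ^ k := by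
      simpa using pow_le_pow_left₀ (abs_nonneg t) ht k
    have h2 : bcoef r (k+1) * (k+1 : ℕ) * ρ ^ (k+1) / ρ
        = bcoef r (k+1) * (k+1 : ℕ) * ρ ^ k := by
      rw [pow_succ]; field_simp
    rw [h2]
    have : (0:ℝ) ≤ bcoef r (k+1) * ((k+1 : ℕ) : ℝ) := by positivity
    calc bcoef r (k+1) * (((k+1:ℕ)) * |t| ^ (k + 1 - 1))
        = bcoef r (k+1) * ((k+1:ℕ)) * |t| ^ (k+1-1) := by ring
      _ ≤ bcoef r (k+1) * ((k+1:ℕ)) * ρ ^ k := by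
          exact mul_le_mul_of_nonneg_left h1 this

lemma summable_zero_pt (r : ℝ) : Summable (fun n : ℕ => bcoef r n * (0:ℝ) ^ n) := by
  apply summable_of_ne_finset_zero (s := ({0} : Finset ℕ))
  intro z hz
  simp only [Finset.mem_singleton] at hz
  simp [zero_pow hz]

lemma hasDerivAt_binomfun {r : ℝ} (hr : 0 < r) {y : ℝ} (hy : |y| < 1) :
    HasDerivAt (fun t => ∑' z : ℕ, bcoef r z * t ^ z)
      (∑' z : ℕ, bcoef r z * (z * y ^ (z - 1))) y := by
  set ρ : ℝ := (|y| + 1) / 2 with hρ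
  have h0y : 0 ≤ |y| := abs_nonneg y
  have hρ0 : 0 < ρ := by rw [hρ]; linarith
  have hρ1 : ρ < 1 := by rw [hρ]; linarith
  have hyρ : |y| < ρ := by rw [hρ]; linarith
  refine hasDerivAt_tsum_of_isPreconnected (u := fun z : ℕ => bcoef r z * z * ρ ^ z / ρ)
    (summable_deriv_aux hr hρ0 hρ1) (isOpen_Ioo : IsOpen (Set.Ioo (-ρ) ρ))
    (convex_Ioo (-ρ) ρ).isPreconnected
    (fun n t _ => (hasDerivAt_pow n t).const_mul (bcoef r n))
    (fun n t ht => norm_deriv_le hr hρ0 (le_of_lt (abs_lt.mpr ⟨ht.1, ht.2⟩)) n)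
    (Set.mem_Ioo.mpr ⟨by linarith, hρ0⟩) (summable_zero_pt r)
    (Set.mem_Ioo.mpr (abs_lt.mp hyρ))

lemma hasSum_binomial {r : ℝ} (hr : 0 < r) {x : ℝ} (hx0 : 0 ≤ x) (hx1 : x < 1) :
    HasSum (fun z : ℕ => bcoef r z * x ^ z) ((1 - x) ^ (-r) : ℝ) := by
  set f : ℝ → ℝ := fun t => ∑' z : ℕ, bcoef r z * t ^ z with hf_def
  set G : ℝ → ℝ := fun t => f t * (1 - t) ^ r with hG_def
  have hG : ∀ y ∈ Set.Ioo (-1:ℝ) 1, HasDerivAt G 0 y := by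
    intro y hy
    have hy' : |y| < 1 := abs_lt.mpr ⟨hy.1, hy.2⟩
    have h1y : 0 < 1 - y := by linarith [hy.2]
    have hf := hasDerivAt_binomfun hr hy'
    set D : ℝ := ∑' z : ℕ, bcoef r z * (z * y ^ (z - 1)) with hD_def
    set S : ℝ := f y with hS_def
    have hS : HasSum (fun z : ℕ => bcoef r z * y ^ z) S :=
      (summable_bcoef_pow hr hy').hasSum
    -- summability of the derivative series at y
    have hDsum : Summable (fun z : ℕ => bcoef r z * (z * y ^ (z - 1))) := by
      set ρ : ℝ := (|y| + 1) / 2 with hρ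
      have h0y : 0 ≤ |y| := abs_nonneg y
      have hρ0 : 0 < ρ := by rw [hρ]; linarith
      have hρ1 : ρ < 1 := by rw [hρ]; linarith
      have hyρ : |y| ≤ ρ := by rw [hρ]; linarith
      exact Summable.of_norm_bounded (summable_deriv_aux hr hρ0 hρ1)
        (fun n => norm_deriv_le hr hρ0 hyρ n)
    have hD : HasSum (fun z : ℕ => bcoef r z * (z * y ^ (z - 1))) D := hDsum.hasSum
    -- key identity : (1 - y) * D = r * S
    have hkey : (1 - y) * D = r * S := by
      have hshift : HasSum (fun z : ℕ => bcoef r (z+1) * ((z+1 : ℕ) * y ^ (z + 1 - 1))) D := by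
        have h := (hasSum_nat_add_iff' (f := fun z : ℕ => bcoef r z * (z * y ^ (z - 1))) 1).mpr hD
        simpa using h
      have hA : HasSum (fun z : ℕ => bcoef r z * (r + z) * y ^ z) D := by
        have e : (fun z : ℕ => bcoef r (z+1) * ((z+1 : ℕ) * y ^ (z + 1 - 1)))
            = fun z : ℕ => bcoef r z * (r + z) * y ^ z := by
          funext z
          have := bcoef_succ_mul r z
          push_cast
          linear_combination y ^ z * this
        rwa [e] at hshift
      have hyD : HasSum (fun z : ℕ => (z : ℝ) * (bcoef r z * y ^ z)) (y * D) := by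
        have h := hD.mul_left y
        have e : (fun z : ℕ => y * (bcoef r z * (z * y ^ (z - 1))))
            = fun z : ℕ => (z : ℝ) * (bcoef r z * y ^ z) := by
          funext z
          cases z with
          | zero => simp
          | succ k =>
              simp only [Nat.add_sub_cancel]
              push_cast
              rw [pow_succ]
              ring
        rwa [e] at h
      have hrS : HasSum (fun z : ℕ => r * (bcoef r z * y ^ z)) (r * S) := hS.mul_left r
      have hB : HasSum (fun z : ℕ => bcoef r z * (r + z) * y ^ z) (r * S + y * D) := by
        have h := hrS.add hyD
        have e : (fun z : ℕ => r * (bcoef r z * y ^ z) + (z : ℝ) * (bcoef r z * y ^ z))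
            = fun z : ℕ => bcoef r z * (r + z) * y ^ z := by
          funext z; ring
        rwa [e] at h
      have := hA.unique hB
      linarith [this]
    have hpow : HasDerivAt (fun t : ℝ => (1 - t) ^ r) (r * (1 - y) ^ (r - 1) * (-1)) y := by
      have h := Real.hasDerivAt_rpow_const (x := 1 - y) (p := r) (Or.inl h1y.ne')
      have hin : HasDerivAt (fun t : ℝ => 1 - t) (-1) y := by
        simpa using (hasDerivAt_id y).const_sub 1
      exact h.comp y hin
    have hGd : HasDerivAt G (D * (1 - y) ^ r + S * (r * (1 - y) ^ (r - 1) * (-1))) y :=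
      hf.mul hpow
    have hval : D * (1 - y) ^ r + S * (r * (1 - y) ^ (r - 1) * (-1)) = 0 := by
      have hsplit : (1 - y : ℝ) ^ r = (1 - y) ^ (r - 1) * (1 - y) := by
        rw [← Real.rpow_add_one h1y.ne' (r - 1)]
        norm_num
      rw [hsplit]
      linear_combination (1 - y : ℝ) ^ (r - 1) * hkey
    rwa [hval] at hGd
  -- G is constant on Ioo (-1) 1
  have hx' : x ∈ Set.Ioo (-1:ℝ) 1 := ⟨by linarith, hx1⟩
  have h0' : (0:ℝ) ∈ Set.Ioo (-1:ℝ) 1 := by constructor <;> norm_num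
  have hconst : G x = G 0 := by
    apply (convex_Ioo (-1:ℝ) 1).is_const_of_fderivWithin_eq_zero (𝕜 := ℝ)
      (fun y hy => ((hG y hy).differentiableAt).differentiableWithinAt) ?_ hx' h0'
    intro y hy
    rw [fderivWithin_of_isOpen isOpen_Ioo hy]
    have hd : deriv G y = 0 := (hG y hy).deriv
    ext t
    simp only [← toSpanSingleton_deriv, hd]
    simp
  have hG0 : G 0 = 1 := by
    have hf0 : f 0 = 1 := by
      have he : f 0 = ∑' z : ℕ, bcoef r z * (0:ℝ) ^ z := rfl
      rw [he, tsum_eq_single 0 (fun z hz => by simp [zero_pow hz])]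
      simp [bcoef_zero]
    simp [hG_def, hf0]
  have h1x : (0:ℝ) < 1 - x := by linarith
  have hfx : f x = (1 - x) ^ (-r) := by
    have h : f x * (1 - x) ^ r = 1 := hconst.trans hG0
    rw [Real.rpow_neg h1x.le]
    have hne : (1 - x : ℝ) ^ r ≠ 0 := (Real.rpow_pos_of_pos h1x r).ne'
    field_simp
    linarith [h]
  have hsum := (summable_bcoef_pow hr (abs_lt.mpr ⟨by linarith, hx1⟩)).hasSum
  rwa [show (∑' z : ℕ, bcoef r z * x ^ z) = (1 - x) ^ (-r) from hfx] at hsum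

lemma betaFn_pos {a b : ℝ} (ha : 0 < a) (hb : 0 < b) : 0 < betaFn a b := by
  have h1 := Real.Gamma_pos_of_pos ha
  have h2 := Real.Gamma_pos_of_pos hb
  have h3 := Real.Gamma_pos_of_pos (by linarith : (0:ℝ) < a + b)
  exact div_pos (mul_pos h1 h2) h3

lemma gamma_mul_gamma_eq (a b : ℝ) (ha : 0 < a) (hb : 0 < b) :
    Real.Gamma a * Real.Gamma b
      = Real.Gamma (a + b) * ∫ x in (0:ℝ)..1, x ^ (a-1) * (1-x) ^ (b-1) := by
  have key := Complex.Gamma_mul_Gamma_eq_betaIntegral (s := (a:ℂ)) (t := (b:ℂ))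
    (by simpa using ha) (by simpa using hb)
  have hIeq : Complex.betaIntegral a b
      = ((∫ x in (0:ℝ)..1, x ^ (a-1) * (1-x) ^ (b-1) : ℝ) : ℂ) := by
    rw [Complex.betaIntegral, ← intervalIntegral.integral_ofReal]
    apply intervalIntegral.integral_congr
    intro x hx
    rw [Set.uIcc_of_le (by norm_num : (0:ℝ) ≤ 1)] at hx
    have hx0 : (0:ℝ) ≤ x := hx.1
    have hx1 : (0:ℝ) ≤ 1 - x := by linarith [hx.2]
    simp only [Complex.ofReal_mul]
    rw [Complex.ofReal_cpow hx0, Complex.ofReal_cpow hx1]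
    push_cast
    ring
  rw [hIeq] at key
  have key2 : ((Real.Gamma a * Real.Gamma b : ℝ) : ℂ)
      = ((Real.Gamma (a + b) * ∫ x in (0:ℝ)..1, x ^ (a-1) * (1-x) ^ (b-1) : ℝ) : ℂ) := by
    push_cast
    rw [← Complex.Gamma_ofReal, ← Complex.Gamma_ofReal, ← Complex.Gamma_ofReal]
    push_cast
    exact key
  exact_mod_cast key2

lemma betaFn_eq_integral (a b : ℝ) (ha : 0 < a) (hb : 0 < b) :
    betaFn a b = ∫ x in Set.Ioo (0:ℝ) 1, x ^ (a-1) * (1-x) ^ (b-1) := by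
  have hne : Real.Gamma (a + b) ≠ 0 := (Real.Gamma_pos_of_pos (by linarith)).ne'
  have h := gamma_mul_gamma_eq a b ha hb
  have h2 : (∫ x in (0:ℝ)..1, x ^ (a-1) * (1-x) ^ (b-1))
      = ∫ x in Set.Ioo (0:ℝ) 1, x ^ (a-1) * (1-x) ^ (b-1) := by
    rw [intervalIntegral.integral_of_le (by norm_num : (0:ℝ) ≤ 1),
      MeasureTheory.integral_Ioc_eq_integral_Ioo]
  rw [betaFn, h, h2, mul_div_assoc, mul_comm]
  field_simp

lemma integrableOn_betafun (a b : ℝ) (ha : 0 < a) (hb : 0 < b) :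
    MeasureTheory.IntegrableOn (fun x : ℝ => x ^ (a-1) * (1-x) ^ (b-1))
      (Set.Ioo (0:ℝ) 1) MeasureTheory.volume := by
  have h := Complex.betaIntegral_convergent (u := (a:ℂ)) (v := (b:ℂ))
    (by simpa using ha) (by simpa using hb)
  rw [intervalIntegrable_iff_integrableOn_Ioc_of_le (by norm_num : (0:ℝ) ≤ 1)] at h
  have h2 : MeasureTheory.IntegrableOn
      (fun x : ℝ => ((x ^ (a-1) * (1-x) ^ (b-1) : ℝ) : ℂ)) (Set.Ioc (0:ℝ) 1)
      MeasureTheory.volume := by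
    apply h.congr_fun ?_ measurableSet_Ioc
    intro x hx
    have hx0 : (0:ℝ) ≤ x := hx.1.le
    have hx1 : (0:ℝ) ≤ 1 - x := by linarith [hx.2]
    simp only [Complex.ofReal_mul]
    rw [Complex.ofReal_cpow hx0, Complex.ofReal_cpow hx1]
    push_cast
    ring
  have h3 : MeasureTheory.IntegrableOn (fun x : ℝ => x ^ (a-1) * (1-x) ^ (b-1))
      (Set.Ioc (0:ℝ) 1) MeasureTheory.volume :=
    MeasureTheory.IntegrableOn.congr_fun h2.re (fun x _ => by simp) measurableSet_Ioc
  exact h3.mono_set Set.Ioo_subset_Ioc_self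

open MeasureTheory
open scoped ENNReal

theorem stmt_6 (r α β : ℝ) (hr : 0 < r) (hα : 0 < α) (hβ : 0 < β) :
    HasSum (fun z : ℕ => (risingFac r z / z.factorial) * betaFn (z + α) (r + β))
      (betaFn α β) ∧
    HasSum (fun z : ℕ => BNBpmf r α β z) 1 := by
  set c : ℕ → ℝ := fun z => bcoef r z * betaFn (z + α) (r + β) with hc
  have hcnn : ∀ z, 0 ≤ c z := fun z =>
    mul_nonneg (bcoef_pos hr z).le (betaFn_pos (by positivity) (by positivity)).le
  set F : ℕ → ℝ → ℝ≥0∞ := fun z x =>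
    ENNReal.ofReal (bcoef r z * (x ^ ((z:ℝ) + α - 1) * (1-x) ^ (r + β - 1))) with hF
  -- step 1
  have h1 : ∀ z : ℕ, ENNReal.ofReal (c z) = ∫⁻ x in Set.Ioo (0:ℝ) 1, F z x := by
    intro z
    have hpos1 : (0:ℝ) < (z:ℝ) + α := by positivity
    have hpos2 : (0:ℝ) < r + β := by positivity
    have hint := (integrableOn_betafun ((z:ℝ)+α) (r+β) hpos1 hpos2).const_mul (bcoef r z)
    have heq : c z = ∫ x in Set.Ioo (0:ℝ) 1,
        bcoef r z * (x ^ ((z:ℝ) + α - 1) * (1-x) ^ (r + β - 1)) := by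
      rw [hc]
      simp only
      rw [betaFn_eq_integral ((z:ℝ)+α) (r+β) hpos1 hpos2, ← MeasureTheory.integral_const_mul]
    rw [heq]
    apply ofReal_integral_eq_lintegral_ofReal hint
    refine (ae_restrict_iff' measurableSet_Ioo).mpr (ae_of_all _ fun x hx => ?_)
    have hx0 : (0:ℝ) < x := hx.1
    have hx1 : (0:ℝ) < 1 - x := by linarith [hx.2]
    have := bcoef_pos hr z
    positivity
  -- step 3 : pointwise sum
  have h3 : ∀ x ∈ Set.Ioo (0:ℝ) 1,
      (∑' z : ℕ, F z x) = ENNReal.ofReal (x ^ (α-1) * (1-x) ^ (β-1)) := by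
    intro x hx
    have hx0 : (0:ℝ) < x := hx.1
    have hx1 : x < 1 := hx.2
    have h1x : (0:ℝ) < 1 - x := by linarith
    have hbs := hasSum_binomial hr hx0.le hx1
    have hhs : HasSum (fun z : ℕ => bcoef r z * (x ^ ((z:ℝ) + α - 1) * (1-x) ^ (r + β - 1)))
        (x ^ (α-1) * (1-x) ^ (β-1)) := by
      have h := hbs.mul_left (x ^ (α-1) * (1-x) ^ (r + β - 1))
      have e : (fun z : ℕ => x ^ (α-1) * (1-x) ^ (r + β - 1) * (bcoef r z * x ^ z))
          = fun z : ℕ => bcoef r z * (x ^ ((z:ℝ) + α - 1) * (1-x) ^ (r + β - 1)) := by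
        funext z
        rw [show (z:ℝ) + α - 1 = (z:ℝ) + (α - 1) by ring,
          Real.rpow_add hx0, Real.rpow_natCast]
        ring
      have ev : x ^ (α-1) * (1-x) ^ (r + β - 1) * (1-x) ^ (-r)
          = x ^ (α-1) * (1-x) ^ (β-1) := by
        rw [mul_assoc, ← Real.rpow_add h1x, show r + β - 1 + -r = β - 1 by ring]
      rw [e, ev] at h
      exact h
    have hnn : ∀ z : ℕ, 0 ≤ bcoef r z * (x ^ ((z:ℝ) + α - 1) * (1-x) ^ (r + β - 1)) := by
      intro z
      have := bcoef_pos hr z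
      positivity
    rw [hF]
    simp only
    rw [← ENNReal.ofReal_tsum_of_nonneg hnn hhs.summable, hhs.tsum_eq]
  -- step 4
  have h4 : (∫⁻ x in Set.Ioo (0:ℝ) 1, ENNReal.ofReal (x ^ (α-1) * (1-x) ^ (β-1)))
      = ENNReal.ofReal (betaFn α β) := by
    rw [betaFn_eq_integral α β hα hβ]
    rw [ofReal_integral_eq_lintegral_ofReal (integrableOn_betafun α β hα hβ)]
    refine (ae_restrict_iff' measurableSet_Ioo).mpr (ae_of_all _ fun x hx => ?_)
    have hx0 : (0:ℝ) < x := hx.1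
    have hx1 : (0:ℝ) < 1 - x := by linarith [hx.2]
    positivity
  -- measurability
  have hmeas : ∀ z : ℕ, AEMeasurable (F z)
      (MeasureTheory.volume.restrict (Set.Ioo (0:ℝ) 1)) := by
    intro z
    apply Measurable.aemeasurable
    apply Measurable.ennreal_ofReal
    fun_prop
  -- main chain
  have main : (∑' z : ℕ, ENNReal.ofReal (c z)) = ENNReal.ofReal (betaFn α β) := by
    calc (∑' z : ℕ, ENNReal.ofReal (c z)) = ∑' z : ℕ, ∫⁻ x in Set.Ioo (0:ℝ) 1, F z x := by
          exact tsum_congr h1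
      _ = ∫⁻ x in Set.Ioo (0:ℝ) 1, ∑' z : ℕ, F z x := (lintegral_tsum hmeas).symm
      _ = ∫⁻ x in Set.Ioo (0:ℝ) 1, ENNReal.ofReal (x ^ (α-1) * (1-x) ^ (β-1)) := by
          apply setLIntegral_congr_fun measurableSet_Ioo
          exact h3
      _ = ENNReal.ofReal (betaFn α β) := h4
  have hsummable : Summable c := by
    have hfin : (∑' z : ℕ, ENNReal.ofReal (c z)) ≠ ⊤ := by
      rw [main]; exact ENNReal.ofReal_ne_top
    have h := ENNReal.summable_toReal hfin
    exact h.congr fun z => ENNReal.toReal_ofReal (hcnn z)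
  have htsum : (∑' z : ℕ, c z) = betaFn α β := by
    have h2 := ENNReal.ofReal_tsum_of_nonneg hcnn hsummable
    rw [main] at h2
    exact (ENNReal.ofReal_eq_ofReal_iff (tsum_nonneg hcnn) (betaFn_pos hα hβ).le).mp h2
  have hfirst : HasSum (fun z : ℕ => (risingFac r z / z.factorial) * betaFn (z + α) (r + β))
      (betaFn α β) := htsum ▸ hsummable.hasSum
  refine ⟨hfirst, ?_⟩
  have h2 := hfirst.mul_right (betaFn α β)⁻¹
  rw [mul_inv_cancel₀ (betaFn_pos hα hβ).ne'] at h2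
  have e : (fun z : ℕ => (risingFac r z / z.factorial) * betaFn (z + α) (r + β) * (betaFn α β)⁻¹)
      = fun z : ℕ => BNBpmf r α β z := by
    funext z
    rw [BNBpmf, div_eq_mul_inv (betaFn _ _)]
    ring
  rwa [e] at h2
end
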